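/- Under the S(2) payoff-sampling dynamic for the prisoner's dilemma with l < 1 < g, the dynamic is ṗ = (1−p)² − (1−p)⁴ − p, which has exactly two rest points in [0,1]: p = 0 and a unique p* ∈ (0,1) with p* ∈ (0.24, 0.25); moreover 0 is unstable (the right derivative of the vector field at 0 is positive). -/

import Mathlib

/-- The S(2) vector field for the PD with l < 1 < g: ṗ = (1-p)² - (1-p)⁴ - p. -/
noncomputable def F18 (p : ℝ) : ℝ := (1-p)^2 - (1-p)^4 - p

private lemma H18_anti : StrictAntiOn (fun p : ℝ => 1 - 5*p + 4*p^2 - p^3) (Set.Icc 0 1) := by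
  apply strictAntiOn_of_deriv_neg (convex_Icc 0 1)
  · fun_prop
  · intro x hx
    rw [interior_Icc] at hx
    have h1 : deriv (fun p : ℝ => 1 - 5*p + 4*p^2 - p^3) x = -5 + 8*x - 3*x^2 := by
      have hd : HasDerivAt (fun p : ℝ => 1 - 5*p + 4*p^2 - p^3) (-5 + 8*x - 3*x^2) x := by
        have h := (((hasDerivAt_id x).const_mul 5).const_sub 1).add
          (((hasDerivAt_pow 2 x).const_mul 4).sub (hasDerivAt_pow 3 x))
        convert h using 1
        · rfl
        · rfl
        · funext p; simp [id]; ring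
        · norm_num; ring
      exact hd.deriv
    rw [h1]
    nlinarith [hx.1, hx.2]

private lemma F18_factor (p : ℝ) : F18 p = p * (1 - 5*p + 4*p^2 - p^3) := by
  unfold F18; ring

theorem stmt_18 (g l : ℝ) (hl : l < 1) (hg : 1 < g) :
    (∀ p : ℝ, (1 - (1-p)^2) * (1-p)^2 - p = F18 p) ∧
    F18 0 = 0 ∧
    (∃ p' ∈ Set.Ioo (0:ℝ) 1, F18 p' = 0 ∧ 0.24 < p' ∧ p' < 0.25 ∧
      ∀ q ∈ Set.Icc (0:ℝ) 1, F18 q = 0 → q = 0 ∨ q = p') ∧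
    (∃ d : ℝ, 0 < d ∧ HasDerivAt F18 d 0) := by
  refine ⟨fun p => by unfold F18; ring, by unfold F18; norm_num, ?_, ?_⟩
  · -- root in (0.24, 0.25)
    have hcont : ContinuousOn F18 (Set.Icc (0.24:ℝ) 0.25) := by
      unfold F18; fun_prop
    have hsub := intermediate_value_Ioo' (by norm_num : (0.24:ℝ) ≤ 0.25) hcont
    have h0 : (0:ℝ) ∈ Set.Ioo (F18 0.25) (F18 0.24) := by
      constructor <;> (unfold F18; norm_num)
    obtain ⟨p', hp', hFp'⟩ := hsub h0
    have hp1 : p' ∈ Set.Ioo (0:ℝ) 1 := ⟨by linarith [hp'.1], by linarith [hp'.2]⟩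
    refine ⟨p', hp1, hFp', hp'.1, hp'.2, ?_⟩
    intro q hq hFq
    rcases eq_or_ne q 0 with h | h
    · exact Or.inl h
    · right
      have hq0 : 1 - 5*q + 4*q^2 - q^3 = 0 := by
        rw [F18_factor] at hFq
        rcases mul_eq_zero.1 hFq with h' | h'
        · exact absurd h' h
        · exact h'
      have hp'0 : 1 - 5*p' + 4*p'^2 - p'^3 = 0 := by
        rw [F18_factor] at hFp'
        rcases mul_eq_zero.1 hFp' with h' | h'
        · exact absurd h' (ne_of_gt hp1.1)
        · exact h'
      have hpIcc : p' ∈ Set.Icc (0:ℝ) 1 := ⟨le_of_lt hp1.1, le_of_lt hp1.2⟩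
      exact H18_anti.injOn hq hpIcc (by rw [hq0, hp'0])
  · refine ⟨1, one_pos, ?_⟩
    have hu : HasDerivAt (fun p : ℝ => 1 - p) (-1) 0 := by
      simpa using (hasDerivAt_id (0:ℝ)).const_sub 1
    have h2 := hu.pow 2
    have h4 := hu.pow 4
    have := (h2.sub h4).sub (hasDerivAt_id 0)
    convert this using 1
    · rfl
    · rfl
    · funext p; rfl
    · norm_num
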